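/- Let Y be a real-valued random variable on a probability space such that (t − Y)₊ is integrable for every t ∈ ℝ, let F(t) = P(Y ≤ t) be its CDF, let S(t) = E[(t − Y)₊] be the expected shortfall, and fix τ ∈ (0,1). If q ∈ ℝ satisfies F(q) = τ, then q maximizes the Rockafellar–Uryasev criterion: for every t ∈ ℝ, t − τ^{-1} S(t) ≤ q − τ^{-1} S(q). -/

import Mathlib

open MeasureTheory

/-- **Rockafellar–Uryasev optimality of the quantile.**
Let `Y` be a real random variable with integrable shortfall `(t − Y)₊` for every `t`,
CDF `F t = P(Y ≤ t)`, and shortfall `S t = E[(t − Y)₊]`.  If `F q = τ ∈ (0,1)`, then `q`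
maximizes `t ↦ t − τ⁻¹ S t`. -/
theorem rockafellar_uryasev_optimality
    {Ω : Type*} [MeasurableSpace Ω] (P : Measure Ω) [IsProbabilityMeasure P]
    (Y : Ω → ℝ) (hY : Measurable Y)
    (hint : ∀ t : ℝ, Integrable (fun ω => max (t - Y ω) 0) P)
    (τ : ℝ) (hτ : τ ∈ Set.Ioo (0 : ℝ) 1)
    (q : ℝ) (hq : (P {ω | Y ω ≤ q}).toReal = τ) :
    ∀ t : ℝ,
      t - τ⁻¹ * ∫ ω, max (t - Y ω) 0 ∂P ≤ q - τ⁻¹ * ∫ ω, max (q - Y ω) 0 ∂P := by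
  obtain ⟨hτ0, hτ1⟩ := hτ
  intro t
  set A : Set Ω := {ω | Y ω ≤ q} with hA_def
  have hA : MeasurableSet A := hY measurableSet_Iic
  have hind : Integrable (A.indicator (fun _ => (t - q))) P :=
    (integrable_const (t - q)).indicator hA
  have key : ∫ ω, (max (q - Y ω) 0 + A.indicator (fun _ => (t - q)) ω) ∂P
      ≤ ∫ ω, max (t - Y ω) 0 ∂P := by
    apply integral_mono ((hint q).add hind) (hint t)
    intro ω
    simp only [Pi.add_apply, Set.indicator_apply, hA_def, Set.mem_setOf_eq]
    by_cases h : Y ω ≤ q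
    · rw [if_pos h]
      have h1 : max (q - Y ω) 0 = q - Y ω := max_eq_left (by linarith)
      have h2 : t - Y ω ≤ max (t - Y ω) 0 := le_max_left _ _
      linarith
    · rw [if_neg h]
      have h1 : max (q - Y ω) 0 = 0 := max_eq_right (by push_neg at h; linarith)
      have h2 : (0:ℝ) ≤ max (t - Y ω) 0 := le_max_right _ _
      linarith
  have hsplit : ∫ ω, (max (q - Y ω) 0 + A.indicator (fun _ => (t - q)) ω) ∂P
      = (∫ ω, max (q - Y ω) 0 ∂P) + (t - q) * τ := by
    rw [integral_add (hint q) hind]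
    congr 1
    rw [integral_indicator_const _ hA]
    simp [smul_eq_mul, Measure.real, hq, mul_comm]
  rw [hsplit] at key
  have hτinv : 0 < τ⁻¹ := inv_pos.mpr hτ0
  have hmul : τ⁻¹ * τ = 1 := inv_mul_cancel₀ hτ0.ne'
  have h3 := mul_le_mul_of_nonneg_left key hτinv.le
  rw [mul_add, mul_comm (t - q) τ, ← mul_assoc, hmul, one_mul] at h3
  linarith
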